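/- Let n be a positive integer and r = μ(n), the minimal number of summands of the form 2^c − 1 (c ≥ 1) needed to write n. Then there exists at most one sequence of positive integers d_1 > d_2 > ... > d_{r−1} ≥ d_r > 0 with n = ∑_{i=1}^r (2^{d_i} − 1). -/

import Mathlib

def popLen (n : ℕ) : ℕ := n.bitIndices.length

@[simp] lemma popLen_zero : popLen 0 = 0 := by simp [popLen]

@[simp] lemma popLen_two_mul (n : ℕ) : popLen (2 * n) = popLen n := by
  simp [popLen]

@[simp] lemma popLen_two_mul_add_one (n : ℕ) : popLen (2 * n + 1) = popLen n + 1 := by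
  simp [popLen]

lemma popLen_succ_le (n : ℕ) : popLen (n + 1) ≤ popLen n + 1 := by
  induction n using Nat.strong_induction_on with
  | _ n IH =>
    rcases Nat.even_or_odd n with ⟨b, hb⟩ | ⟨b, hb⟩
    · have hb' : n = 2 * b := by omega
      subst hb'
      rw [popLen_two_mul, popLen_two_mul_add_one]
    · subst hb
      have h1 : 2 * b + 1 + 1 = 2 * (b + 1) := by ring
      rw [h1, popLen_two_mul, popLen_two_mul_add_one]
      have := IH b (by omega)
      omega

lemma popLen_add_two_pow_le (c : ℕ) : ∀ a : ℕ, popLen (a + 2 ^ c) ≤ popLen a + 1 := by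
  induction c with
  | zero => intro a; simpa using popLen_succ_le a
  | succ c IH =>
    intro a
    rcases Nat.even_or_odd a with ⟨b, hb⟩ | ⟨b, hb⟩
    · have hb' : a = 2 * b := by omega
      subst hb'
      have h1 : 2 * b + 2 ^ (c + 1) = 2 * (b + 2 ^ c) := by ring
      rw [h1, popLen_two_mul, popLen_two_mul]
      exact IH b
    · subst hb
      have h1 : 2 * b + 1 + 2 ^ (c + 1) = 2 * (b + 2 ^ c) + 1 := by ring
      rw [h1, popLen_two_mul_add_one, popLen_two_mul_add_one]
      have := IH b
      omega

lemma popLen_sum_le : ∀ (k : ℕ) (f : Fin k → ℕ), popLen (∑ i, 2 ^ f i) ≤ k := by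
  intro k
  induction k with
  | zero => intro f; simp
  | succ k IH =>
    intro f
    rw [Fin.sum_univ_castSucc]
    calc popLen (∑ i : Fin k, 2 ^ f i.castSucc + 2 ^ f (Fin.last k))
        ≤ popLen (∑ i : Fin k, 2 ^ f i.castSucc) + 1 := popLen_add_two_pow_le _ _
      _ ≤ k + 1 := by exact Nat.add_le_add_right (IH _) 1

lemma bitIndices_of_strictAnti {k : ℕ} (f : Fin k → ℕ)
    (hf : ∀ i j : Fin k, i < j → f j < f i) :
    (∑ i, 2 ^ f i).bitIndices = List.ofFn (fun i => f i.rev) := by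
  have hsum : ∑ i, 2 ^ f i = ((List.ofFn (fun i : Fin k => f i.rev)).map (fun i => 2 ^ i)).sum := by
    rw [List.map_ofFn, List.sum_ofFn]
    exact (Fintype.sum_bijective Fin.rev Fin.rev_bijective _ _ (fun i => rfl)).symm
  rw [hsum, Nat.bitIndices_twoPowsum]
  rw [List.sortedLT_ofFn_iff]
  intro i j hij
  exact hf _ _ (by simpa using Fin.rev_lt_rev.mpr hij)

lemma popLen_sum_strictAnti {k : ℕ} (f : Fin k → ℕ)
    (hf : ∀ i j : Fin k, i < j → f j < f i) :
    popLen (∑ i, 2 ^ f i) = k := by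
  rw [popLen, bitIndices_of_strictAnti f hf, List.length_ofFn]

lemma strictAnti_eq_of_sum_eq {k : ℕ} (f g : Fin k → ℕ)
    (hf : ∀ i j : Fin k, i < j → f j < f i)
    (hg : ∀ i j : Fin k, i < j → g j < g i)
    (h : ∑ i, 2 ^ f i = ∑ i, 2 ^ g i) : f = g := by
  have h1 := bitIndices_of_strictAnti f hf
  have h2 := bitIndices_of_strictAnti g hg
  rw [h] at h1
  have h3 : (fun i : Fin k => f i.rev) = fun i => g i.rev :=
    List.ofFn_injective (h1.symm.trans h2)
  funext i
  have := congrFun h3 i.rev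
  simpa using this

lemma sum_pow_eq {k : ℕ} (f : Fin k → ℕ) :
    ∑ i, 2 ^ f i = (∑ i, (2 ^ f i - 1)) + k := by
  calc ∑ i, 2 ^ f i = ∑ i : Fin k, ((2 ^ f i - 1) + 1) :=
        Finset.sum_congr rfl (fun i _ => by
          have : 1 ≤ 2 ^ f i := Nat.one_le_two_pow
          omega)
    _ = (∑ i, (2 ^ f i - 1)) + k := by
        rw [Finset.sum_add_distrib]
        simp

def merge {s : ℕ} (e : Fin (s + 2) → ℕ) : Fin (s + 1) → ℕ :=
  fun i => if (i : ℕ) < s then e (Fin.castSucc i) else e (Fin.last (s + 1)) + 1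

lemma merge_pos {s : ℕ} (e : Fin (s + 2) → ℕ) (he : ∀ i, 0 < e i) :
    ∀ i, 0 < merge e i := by
  intro i
  unfold merge
  split
  · exact he _
  · omega

lemma merge_sum {s : ℕ} (e : Fin (s + 2) → ℕ)
    (hrep : e ⟨s, by omega⟩ = e (Fin.last (s + 1))) :
    ∑ i, 2 ^ merge e i = ∑ i, 2 ^ e i := by
  rw [Fin.sum_univ_castSucc (f := fun i => 2 ^ e i),
    Fin.sum_univ_castSucc (f := fun i : Fin (s + 1) => 2 ^ e i.castSucc),
    Fin.sum_univ_castSucc (f := fun i => 2 ^ merge e i)]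
  have h1 : ∀ i : Fin s, merge e i.castSucc = e i.castSucc.castSucc := by
    intro i
    simp only [merge, Fin.coe_castSucc]
    rw [if_pos i.isLt]
  have h2 : merge e (Fin.last s) = e (Fin.last (s + 1)) + 1 := by
    simp [merge]
  have h3 : e ((Fin.last s).castSucc) = e (Fin.last (s + 1)) := by
    have : (Fin.last s).castSucc = (⟨s, by omega⟩ : Fin (s + 2)) := rfl
    rw [this, hrep]
  simp only [h1, h2, h3]
  rw [pow_succ]
  ring

lemma lb {n r : ℕ}
    (hr : IsLeast {m : ℕ | ∃ c : Fin m → ℕ, (∀ i, 1 ≤ c i) ∧ ∑ i, (2 ^ c i - 1) = n} r)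
    {m : ℕ} (c : Fin m → ℕ) (hc1 : ∀ i, 1 ≤ c i) (hcs : ∑ i, (2 ^ c i - 1) = n + 1) :
    r ≤ m + 1 := by
  by_cases hex : ∃ j, 2 ≤ c j
  · obtain ⟨j, hj⟩ := hex
    have key : r ≤ m + 1 := by
      apply hr.2
      refine ⟨Fin.cases (c j - 1) (Function.update c j (c j - 1)), ?_, ?_⟩
      · intro i
        induction i using Fin.cases with
        | zero => simp; omega
        | succ i =>
          simp only [Fin.cases_succ]
          rcases eq_or_ne i j with rfl | hne
          · rw [Function.update_self]; omega
          · rw [Function.update_of_ne hne]; exact hc1 i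
      · rw [Fin.sum_univ_succ]
        simp only [Fin.cases_zero, Fin.cases_succ]
        have hupd : (fun i : Fin m => 2 ^ (Function.update c j (c j - 1) i) - 1) =
            Function.update (fun i => 2 ^ c i - 1) j (2 ^ (c j - 1) - 1) := by
          funext i
          rcases eq_or_ne i j with rfl | hne
          · rw [Function.update_self, Function.update_self]
          · rw [Function.update_of_ne hne, Function.update_of_ne hne]
        have hsum2 : ∑ i : Fin m, (2 ^ (Function.update c j (c j - 1) i) - 1) =
            (2 ^ (c j - 1) - 1) + ∑ i ∈ Finset.univ \ {j}, (2 ^ c i - 1) := by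
          rw [hupd, Finset.sum_update_of_mem (Finset.mem_univ j)]
        have hsum3 : (∑ i ∈ Finset.univ \ {j}, (2 ^ c i - 1)) + (2 ^ c j - 1) = n + 1 := by
          rw [← Finset.sum_eq_sum_sdiff_singleton_add (Finset.mem_univ j), hcs]
        have hpow : 2 ^ c j = 2 * 2 ^ (c j - 1) := by
          rw [← pow_succ']
          congr 1
          omega
        have hpos : 1 ≤ 2 ^ (c j - 1) := Nat.one_le_two_pow
        rw [hsum2]
        omega
    exact key
  · push_neg at hex
    have hc2 : ∀ i, c i = 1 := fun i => by have := hc1 i; have := hex i; omega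
    have hm : m = n + 1 := by
      rw [← hcs]
      simp [hc2]
    have : r ≤ n := by
      apply hr.2
      exact ⟨fun _ : Fin n => 1, fun _ => le_refl 1, by simp⟩
    omega

lemma merge_apply_lt {s : ℕ} (e : Fin (s + 2) → ℕ) (i : Fin (s + 1)) (hi : (i : ℕ) < s) :
    merge e i = e (Fin.castSucc i) := by
  unfold merge
  rw [if_pos hi]

lemma merge_apply_last {s : ℕ} (e : Fin (s + 2) → ℕ) (i : Fin (s + 1)) (hi : ¬ (i : ℕ) < s) :
    merge e i = e (Fin.last (s + 1)) + 1 := by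
  unfold merge
  rw [if_neg hi]

lemma spike_unique : ∀ (r n : ℕ), 0 < n →
    IsLeast {m : ℕ | ∃ c : Fin m → ℕ, (∀ i, 1 ≤ c i) ∧ ∑ i, (2 ^ c i - 1) = n} r →
    ∀ d e : Fin r → ℕ,
    (∀ i, 0 < d i) → (∀ i j : Fin r, i < j → d j ≤ d i) →
    (∀ i j : Fin r, i < j → (j : ℕ) + 2 ≤ r → d j < d i) → (∑ i, (2 ^ d i - 1) = n) →
    (∀ i, 0 < e i) → (∀ i j : Fin r, i < j → e j ≤ e i) →
    (∀ i j : Fin r, i < j → (j : ℕ) + 2 ≤ r → e j < e i) → (∑ i, (2 ^ e i - 1) = n) →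
    d = e := by
  intro r
  induction r using Nat.strong_induction_on with
  | _ r IH =>
  intro n hn hr d e hd0 hdmono hdstrict hdsum he0 hemono hestrict hesum
  match r, IH, hr, d, e, hd0, hdmono, hdstrict, hdsum, he0, hemono, hestrict, hesum with
  | 0, IH, hr, d, e, hd0, hdmono, hdstrict, hdsum, he0, hemono, hestrict, hesum =>
    simp at hdsum; omega
  | 1, IH, hr, d, e, hd0, hdmono, hdstrict, hdsum, he0, hemono, hestrict, hesum =>
    have h1 : 2 ^ d 0 - 1 = n := by simpa using hdsum
    have h2 : 2 ^ e 0 - 1 = n := by simpa using hesum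
    have hd1 : 1 ≤ 2 ^ d 0 := Nat.one_le_two_pow
    have he1 : 1 ≤ 2 ^ e 0 := Nat.one_le_two_pow
    have : 2 ^ d 0 = 2 ^ e 0 := by omega
    have hde : d 0 = e 0 := Nat.pow_right_injective (le_refl 2) this
    funext i
    have : i = 0 := Subsingleton.elim i 0
    rw [this, hde]
  | (s + 2), IH, hr, d, e, hd0, hdmono, hdstrict, hdsum, he0, hemono, hestrict, hesum =>
    set L : Fin (s + 2) := Fin.last (s + 1) with hL
    set Sec : Fin (s + 2) := ⟨s, by omega⟩ with hSec
    have hSL : Sec < L := by simp [hSec, hL, Fin.lt_def]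
    -- d/e are all-strict if strict at the last step
    have hall : ∀ f : Fin (s + 2) → ℕ,
        (∀ i j : Fin (s + 2), i < j → (j : ℕ) + 2 ≤ s + 2 → f j < f i) →
        f L < f Sec → ∀ i j : Fin (s + 2), i < j → f j < f i := by
      intro f hstr h i j hij
      by_cases hj : (j : ℕ) + 2 ≤ s + 2
      · exact hstr i j hij hj
      · have hjL : j = L := by
          apply Fin.ext
          have := j.isLt
          simp only [hL, Fin.val_last]
          omega
        subst hjL
        rcases eq_or_lt_of_le (show (i : ℕ) ≤ s by have := Fin.lt_def.mp hij; simp [hL] at this; omega)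
          with hi | hi
        · have : i = Sec := Fin.ext (by simpa [hSec] using hi)
          rw [this]; exact h
        · have hiSec : i < Sec := by simp [Fin.lt_def, hSec]; omega
          exact lt_trans h (hstr i Sec hiSec (by simp [hSec]))
    have hdS : ∑ i, 2 ^ d i = n + (s + 2) := by rw [sum_pow_eq, hdsum]
    have heS : ∑ i, 2 ^ e i = n + (s + 2) := by rw [sum_pow_eq, hesum]
    -- merge facts
    have hmerge_props : ∀ f : Fin (s + 2) → ℕ, (∀ i, 0 < f i) →
        (∀ i j : Fin (s + 2), i < j → f j ≤ f i) →
        (∀ i j : Fin (s + 2), i < j → (j : ℕ) + 2 ≤ s + 2 → f j < f i) →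
        f Sec = f L → (∑ i, (2 ^ f i - 1) = n) →
        (∀ i, 0 < merge f i) ∧
        (∀ i j : Fin (s + 1), i < j → merge f j ≤ merge f i) ∧
        (∀ i j : Fin (s + 1), i < j → (j : ℕ) + 2 ≤ s + 1 → merge f j < merge f i) ∧
        (∑ i, (2 ^ merge f i - 1) = n + 1) := by
      intro f hf0 hfmono hfstrict hrep hfsum
      have hmsum : ∑ i, 2 ^ merge f i = ∑ i, 2 ^ f i := merge_sum f hrep
      have hfirst : ∀ i : Fin (s + 1), (i : ℕ) < s → merge f i = f (Fin.castSucc i) := by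
        intro i hi; simp only [merge]; rw [if_pos hi]
      have hlast : ∀ i : Fin (s + 1), (i : ℕ) = s → merge f i = f L + 1 := by
        intro i hi; simp only [merge]; rw [if_neg (by omega)]
      refine ⟨merge_pos f hf0, ?_, ?_, ?_⟩
      · intro i j hij
        have hij' : (i : ℕ) < (j : ℕ) := hij
        by_cases hjs : (j : ℕ) < s
        · rw [hfirst i (by omega), hfirst j hjs]
          exact hfmono _ _ (Fin.castSucc_lt_castSucc_iff.mpr hij)
        · have hjs' : (j : ℕ) = s := by have := j.isLt; omega
          rw [hfirst i (by omega), hlast j hjs']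
          have hcs : Fin.castSucc i < Sec := by simp [Fin.lt_def, hSec]; omega
          have := hfstrict (Fin.castSucc i) Sec hcs (by simp [hSec])
          rw [hrep] at this
          omega
      · intro i j hij hj2
        rw [hfirst i (by omega), hfirst j (by omega)]
        exact hfstrict _ _ (Fin.castSucc_lt_castSucc_iff.mpr hij) (by simp; omega)
      · have := sum_pow_eq (merge f)
        have h2 := sum_pow_eq f
        rw [hmsum] at this
        omega
    have hdle : d L ≤ d Sec := hdmono Sec L hSL
    have hele : e L ≤ e Sec := hemono Sec L hSL
    by_cases hds : d L < d Sec <;> by_cases hes : e L < e Sec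
    · exact strictAnti_eq_of_sum_eq d e (hall d hdstrict hds) (hall e hestrict hes)
        (hdS.trans heS.symm)
    · exfalso
      have hrep : e Sec = e L := by omega
      have h1 : popLen (n + (s + 2)) = s + 2 := by
        rw [← hdS]; exact popLen_sum_strictAnti d (hall d hdstrict hds)
      have h2 : popLen (n + (s + 2)) ≤ s + 1 := by
        rw [← heS, ← merge_sum e hrep]; exact popLen_sum_le _ _
      omega
    · exfalso
      have hrep : d Sec = d L := by omega
      have h1 : popLen (n + (s + 2)) = s + 2 := by
        rw [← heS]; exact popLen_sum_strictAnti e (hall e hestrict hes)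
      have h2 : popLen (n + (s + 2)) ≤ s + 1 := by
        rw [← hdS, ← merge_sum d hrep]; exact popLen_sum_le _ _
      omega
    · -- both repeat: use induction hypothesis on (s+1, n+1)
      have hrepd : d Sec = d L := by omega
      have hrepe : e Sec = e L := by omega
      obtain ⟨hd0', hdmono', hdstrict', hdsum'⟩ :=
        hmerge_props d hd0 hdmono hdstrict hrepd hdsum
      obtain ⟨he0', hemono', hestrict', hesum'⟩ :=
        hmerge_props e he0 hemono hestrict hrepe hesum
      have hleast : IsLeast {m : ℕ | ∃ c : Fin m → ℕ,
          (∀ i, 1 ≤ c i) ∧ ∑ i, (2 ^ c i - 1) = n + 1} (s + 1) := by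
        constructor
        · exact ⟨merge d, fun i => hd0' i, hdsum'⟩
        · intro m hm
          obtain ⟨c, hc1, hcs⟩ := hm
          have := lb hr c hc1 hcs
          omega
      have hmde : merge d = merge e :=
        IH (s + 1) (by omega) (n + 1) (by omega) hleast (merge d) (merge e)
          hd0' hdmono' hdstrict' hdsum' he0' hemono' hestrict' hesum'
      have hdeL : d L = e L := by
        have h := congrFun hmde (Fin.last s)
        simp only [merge, Fin.val_last] at h
        rw [if_neg (lt_irrefl s), if_neg (lt_irrefl s)] at h
        rw [hL]
        omega
      funext i
      induction i using Fin.lastCases with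
      | last =>
        rw [hL] at hdeL
        exact hdeL
      | cast i =>
        by_cases hi : (i : ℕ) < s
        · have h := congrFun hmde i
          rw [merge_apply_lt d i hi, merge_apply_lt e i hi] at h
          exact h
        · have hi' : (i : ℕ) = s := by have := i.isLt; omega
          have hcs : Fin.castSucc i = Sec := Fin.ext (by simpa [hSec] using hi')
          rw [hcs, hrepd, hrepe, hdeL]

/-- Uniqueness of the minimal spike: if `r = μ(n)` is the least number of summands of the form
`2^c − 1` (`c ≥ 1`) needed to write `n > 0`, then there is at most one sequence
`d₁ > d₂ > ⋯ > d_{r−1} ≥ d_r > 0` with `n = ∑ (2^{d_i} − 1)`. -/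
theorem stmt_9 (n r : ℕ) (hn : 0 < n)
    (hr : IsLeast {m : ℕ | ∃ c : Fin m → ℕ, (∀ i, 1 ≤ c i) ∧ ∑ i, (2 ^ c i - 1) = n} r)
    (d e : Fin r → ℕ)
    (hd0 : ∀ i, 0 < d i)
    (hdmono : ∀ i j : Fin r, i < j → d j ≤ d i)
    (hdstrict : ∀ i j : Fin r, i < j → (j : ℕ) + 2 ≤ r → d j < d i)
    (hdsum : ∑ i, (2 ^ d i - 1) = n)
    (he0 : ∀ i, 0 < e i)
    (hemono : ∀ i j : Fin r, i < j → e j ≤ e i)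
    (hestrict : ∀ i j : Fin r, i < j → (j : ℕ) + 2 ≤ r → e j < e i)
    (hesum : ∑ i, (2 ^ e i - 1) = n) :
    d = e :=
  spike_unique r n hn hr d e hd0 hdmono hdstrict hdsum he0 hemono hestrict hesum
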